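/- For every n ≥ 1, every tuning parameter η_n > 0 and every δ with 0 < δ < 1, the half-lengths of the shortest δ-level intervals satisfy a_{n,H}* > a_{n,A}* > a_{n,S}* > n^{−1/2} Φ^{−1}((1 + δ)/2), where a_{n,S}*, a_{n,H}*, and a_{n,A}* are the unique nonnegative solutions of Φ(n^{1/2}(a − η_n)) − Φ(n^{1/2}(−a − η_n)) = δ, Φ(n^{1/2}(a − η_n)) − Φ(−n^{1/2} a) = δ, and Φ(n^{1/2}(a − η_n)) − Φ(−n^{1/2} sqrt(a² + η_n²)) = δ, respectively. -/

import Mathlib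

open MeasureTheory ProbabilityTheory Filter
open scoped NNReal

/-- Standard normal cumulative distribution function Φ. -/
noncomputable def stdNormCDF (x : ℝ) : ℝ :=
  ((gaussianReal 0 1) (Set.Iic x)).toReal

/-- Soft-thresholding (LASSO) estimator with threshold η, as a function of ȳ. -/
noncomputable def softThresh (η y : ℝ) : ℝ := Real.sign y * max (|y| - η) 0

/-- Hard-thresholding estimator with threshold η, as a function of ȳ. -/
noncomputable def hardThresh (η y : ℝ) : ℝ := if η < |y| then y else 0

/-- Adaptive LASSO estimator with tuning parameter η, as a function of ȳ. -/
noncomputable def adaLasso (η y : ℝ) : ℝ := if |y| ≤ η then 0 else y - η ^ 2 / y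

/-- Coverage probability `P_{n,θ}(θ ∈ [est(ȳ) - a, est(ȳ) + b])` in the
known-variance case (σ = 1), where ȳ ~ N(θ, 1/n). -/
noncomputable def cover (n : ℕ) (est : ℝ → ℝ) (a b θ : ℝ) : ℝ :=
  ((gaussianReal θ ((n : ℝ≥0))⁻¹)
    {y : ℝ | est y - a ≤ θ ∧ θ ≤ est y + b}).toReal

/-- The inverse Φ⁻¹ of the standard normal cumulative distribution function. -/
noncomputable def stdNormCDFInv : ℝ → ℝ := Function.invFun stdNormCDF

section Aux
open Set

noncomputable def phi : ℝ → ℝ := gaussianPDFReal 0 1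

lemma phi_cont : Continuous phi := by
  unfold phi gaussianPDFReal
  fun_prop

lemma phi_pos (x : ℝ) : 0 < phi x := gaussianPDFReal_pos 0 1 x one_ne_zero

lemma phi_even (x : ℝ) : phi (-x) = phi x := by
  unfold phi gaussianPDFReal
  norm_num

lemma phi_lt_phi {x y : ℝ} (h : x^2 < y^2) : phi y < phi x := by
  unfold phi gaussianPDFReal
  have : Real.exp (-(y - 0)^2 / (2 * (1:ℝ≥0))) < Real.exp (-(x - 0)^2 / (2 * (1:ℝ≥0))) := by
    apply Real.exp_lt_exp.2
    push_cast
    nlinarith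
  have hc : (0:ℝ) < (Real.sqrt (2 * Real.pi * (1:ℝ≥0)))⁻¹ := by
    rw [inv_pos]
    apply Real.sqrt_pos.2
    positivity
  exact mul_lt_mul_of_pos_left this hc

lemma phi_integrable : Integrable phi := integrable_gaussianPDFReal 0 1

lemma stdNormCDF_eq (x : ℝ) : stdNormCDF x = ∫ t in Set.Iic x, phi t := by
  unfold stdNormCDF phi
  rw [gaussianReal_apply_eq_integral 0 one_ne_zero, ENNReal.toReal_ofReal
    (setIntegral_nonneg measurableSet_Iic fun t _ => gaussianPDFReal_nonneg 0 1 t)]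

lemma stdNormCDF_sub (x y : ℝ) : stdNormCDF y - stdNormCDF x = ∫ t in x..y, phi t := by
  rw [stdNormCDF_eq, stdNormCDF_eq]
  exact intervalIntegral.integral_Iic_sub_Iic phi_integrable.integrableOn phi_integrable.integrableOn

lemma stdNormCDF_strictMono : StrictMono stdNormCDF := by
  intro x y hxy
  have h : stdNormCDF y - stdNormCDF x = ∫ t in x..y, phi t := stdNormCDF_sub x y
  have hpos : 0 < ∫ t in x..y, phi t :=
    intervalIntegral.intervalIntegral_pos_of_pos phi_integrable.intervalIntegrable phi_pos hxy
  linarith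

lemma stdNormCDF_mono : Monotone stdNormCDF := stdNormCDF_strictMono.monotone

lemma stdNormCDF_hasDerivAt (x : ℝ) : HasDerivAt stdNormCDF (phi x) x := by
  have h := (phi_cont.integral_hasStrictDerivAt 0 x).hasDerivAt
  have : stdNormCDF = fun y => (∫ t in (0:ℝ)..y, phi t) + stdNormCDF 0 := by
    funext y
    have := stdNormCDF_sub 0 y
    linarith
  rw [this]
  simpa using h.add_const (stdNormCDF 0)

lemma stdNormCDF_add_neg (x : ℝ) : stdNormCDF x + stdNormCDF (-x) = 1 := by
  have h1 : stdNormCDF (-x) = ∫ t in Ioi x, phi t := by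
    rw [stdNormCDF_eq]
    have : ∀ t : ℝ, phi t = phi (-t) := fun t => (phi_even t).symm
    calc ∫ t in Iic (-x), phi t = ∫ t in Iic (-x), phi (-t) := by
          exact setIntegral_congr_fun measurableSet_Iic fun t _ => this t
      _ = ∫ t in Ioi (-(-x)), phi t := integral_comp_neg_Iic (-x) phi
      _ = ∫ t in Ioi x, phi t := by rw [neg_neg]
  rw [stdNormCDF_eq, h1]
  rw [intervalIntegral.integral_Iic_add_Ioi phi_integrable.integrableOn
    phi_integrable.integrableOn]
  simpa [phi] using integral_gaussianPDFReal_eq_one 0 one_ne_zero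

lemma stdNormCDF_lt_one (x : ℝ) : stdNormCDF x < 1 := by
  have h := stdNormCDF_add_neg x
  have h2 : 0 < stdNormCDF (-x) - stdNormCDF (-x-1) := by
    have := stdNormCDF_strictMono (show -x-1 < -x by linarith)
    linarith
  have h3 : 0 ≤ stdNormCDF (-x-1) := by
    rw [stdNormCDF_eq]
    exact setIntegral_nonneg measurableSet_Iic fun t _ => (phi_pos t).le
  linarith

lemma stdNormCDF_pos (x : ℝ) : 0 < stdNormCDF x := by
  have h := stdNormCDF_add_neg x
  have := stdNormCDF_lt_one (-x)
  linarith

lemma stdNormCDF_continuous : Continuous stdNormCDF := by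
  have : Differentiable ℝ stdNormCDF := fun x => (stdNormCDF_hasDerivAt x).differentiableAt
  exact this.continuous

lemma keyIneq {x h : ℝ} (hx : 0 < x) (hh : 0 < h) :
    stdNormCDF (x - h) - stdNormCDF (-x - h) < stdNormCDF x - stdNormCDF (-x) := by
  set f : ℝ → ℝ := fun t => stdNormCDF (x - t) - stdNormCDF (-x - t) with hf
  have hderiv : ∀ t : ℝ, HasDerivAt f (phi (x + t) - phi (x - t)) t := by
    intro t
    have h1 : HasDerivAt (fun t : ℝ => stdNormCDF (x - t)) (-phi (x - t)) t := by
      simpa [Function.comp_def] using (stdNormCDF_hasDerivAt (x - t)).comp t ((hasDerivAt_id t).const_sub x)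
    have h2 : HasDerivAt (fun t : ℝ => stdNormCDF (-x - t)) (-phi (-x - t)) t := by
      simpa [Function.comp_def] using (stdNormCDF_hasDerivAt (-x - t)).comp t ((hasDerivAt_id t).const_sub (-x))
    have := h1.sub h2
    have he : phi (-x - t) = phi (x + t) := by rw [show -x - t = -(x + t) by ring, phi_even]
    rw [he] at this
    rw [show phi (x + t) - phi (x - t) = -phi (x - t) - -phi (x + t) by ring]
    exact this
  have hanti : StrictAntiOn f (Set.Ici 0) := by
    apply strictAntiOn_of_deriv_neg (convex_Ici 0)
    · exact (Continuous.sub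
        (stdNormCDF_continuous.comp (by fun_prop))
        (stdNormCDF_continuous.comp (by fun_prop))).continuousOn
    · intro t ht
      rw [interior_Ici] at ht
      rw [(hderiv t).deriv]
      have : (x - t)^2 < (x + t)^2 := by nlinarith [Set.mem_Ioi.mp ht]
      have := phi_lt_phi this
      linarith
  have := hanti (Set.self_mem_Ici) (Set.mem_Ici.mpr hh.le) hh
  simpa [hf] using this

lemma stdNormCDF_tendsto_atTop : Tendsto stdNormCDF atTop (nhds 1) := by
  have h := tendsto_measure_Iic_atTop (gaussianReal 0 1)
  have huniv : (gaussianReal 0 1) Set.univ = 1 := measure_univ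
  rw [huniv] at h
  have := (ENNReal.tendsto_toReal ENNReal.one_ne_top).comp h
  exact this

lemma stdNormCDF_tendsto_atBot : Tendsto stdNormCDF atBot (nhds 0) := by
  have h : Tendsto (fun x : ℝ => stdNormCDF (-x)) atBot (nhds 1) :=
    stdNormCDF_tendsto_atTop.comp tendsto_neg_atBot_atTop
  have h2 : Tendsto (fun x : ℝ => 1 - stdNormCDF (-x)) atBot (nhds (1 - 1)) :=
    tendsto_const_nhds.sub h
  norm_num at h2
  convert h2 using 2 with x
  have := stdNormCDF_add_neg x
  linarith

lemma stdNormCDF_exists {p : ℝ} (h0 : 0 < p) (h1 : p < 1) : ∃ c, stdNormCDF c = p := by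
  obtain ⟨B, hB⟩ := (stdNormCDF_tendsto_atTop.eventually_const_lt h1).exists
  obtain ⟨A, hA⟩ := (stdNormCDF_tendsto_atBot.eventually_lt_const h0).exists
  have hAB : A ≤ B := by
    by_contra hcon
    have := stdNormCDF_mono (le_of_not_ge hcon)
    linarith
  have := intermediate_value_Icc hAB stdNormCDF_continuous.continuousOn
  have hp : p ∈ Set.Icc (stdNormCDF A) (stdNormCDF B) := ⟨hA.le, hB.le⟩
  obtain ⟨c, _, hc⟩ := this hp
  exact ⟨c, hc⟩

end Aux

/-- Ordering of the half-lengths of the shortest δ-level intervals: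
`a_{n,H}* > a_{n,A}* > a_{n,S}* > n^{-1/2} Φ⁻¹((1+δ)/2)`. -/
theorem stmt_9 (n : ℕ) (hn : 1 ≤ n) (η : ℝ) (hη : 0 < η) (δ : ℝ) (hδ0 : 0 < δ)
    (hδ1 : δ < 1) (aS aH aA : ℝ) (haS : 0 ≤ aS) (haH : 0 ≤ aH) (haA : 0 ≤ aA)
    (heqS : stdNormCDF (Real.sqrt n * (aS - η)) - stdNormCDF (Real.sqrt n * (-aS - η)) = δ)
    (heqH : stdNormCDF (Real.sqrt n * (aH - η)) - stdNormCDF (-(Real.sqrt n * aH)) = δ)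
    (heqA : stdNormCDF (Real.sqrt n * (aA - η)) -
      stdNormCDF (-(Real.sqrt n * Real.sqrt (aA ^ 2 + η ^ 2))) = δ) :
    aH > aA ∧ aA > aS ∧ aS > (Real.sqrt n)⁻¹ * stdNormCDFInv ((1 + δ) / 2) := by
  set s := Real.sqrt n with hs
  have hnpos : (0:ℝ) < (n:ℝ) := by exact_mod_cast hn
  have hspos : 0 < s := Real.sqrt_pos.2 hnpos
  -- aS > 0
  have haS0 : 0 < aS := by
    rcases haS.lt_or_eq with h | h
    · exact h
    · exfalso
      rw [← h] at heqS
      rw [show (0:ℝ) - η = -0 - η by ring] at heqS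
      simp at heqS
      linarith
  -- aA > 0 not needed; key sqrt facts
  have hsq1 : aA < Real.sqrt (aA ^ 2 + η ^ 2) := by
    have h1 : aA = Real.sqrt (aA ^ 2) := by rw [Real.sqrt_sq haA]
    rw [h1]
    apply Real.sqrt_lt_sqrt (sq_nonneg _)
    nlinarith
  have hHA : aA < aH := by
    by_contra hcon
    push_neg at hcon
    have h1 : stdNormCDF (s * (aH - η)) ≤ stdNormCDF (s * (aA - η)) :=
      stdNormCDF_mono (by nlinarith)
    have h2 : stdNormCDF (-(s * Real.sqrt (aA ^ 2 + η ^ 2))) < stdNormCDF (-(s * aH)) :=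
      stdNormCDF_strictMono (by nlinarith)
    linarith
  have hAS : aS < aA := by
    by_contra hcon
    push_neg at hcon
    have h1 : stdNormCDF (s * (aA - η)) ≤ stdNormCDF (s * (aS - η)) :=
      stdNormCDF_mono (by nlinarith)
    have hsq2 : Real.sqrt (aA ^ 2 + η ^ 2) ≤ Real.sqrt (aS ^ 2 + η ^ 2) :=
      Real.sqrt_le_sqrt (by nlinarith)
    have hsq3 : Real.sqrt (aS ^ 2 + η ^ 2) < aS + η := by
      have h1 : aS + η = Real.sqrt ((aS + η) ^ 2) := by
        rw [Real.sqrt_sq (by linarith)]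
      rw [h1]
      apply Real.sqrt_lt_sqrt (by positivity)
      nlinarith
    have h2 : stdNormCDF (s * (-aS - η)) < stdNormCDF (-(s * Real.sqrt (aA ^ 2 + η ^ 2))) :=
      stdNormCDF_strictMono (by nlinarith)
    linarith
  refine ⟨hHA, hAS, ?_⟩
  obtain ⟨c0, hc0⟩ := stdNormCDF_exists (p := (1 + δ) / 2) (by linarith) (by linarith)
  have hc : stdNormCDF (stdNormCDFInv ((1 + δ) / 2)) = (1 + δ) / 2 :=
    Function.invFun_eq ⟨c0, hc0⟩
  set c := stdNormCDFInv ((1 + δ) / 2) with hcdef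
  have hkey := keyIneq (mul_pos hspos haS0) (mul_pos hspos hη)
  rw [show s * aS - s * η = s * (aS - η) by ring,
    show -(s * aS) - s * η = s * (-aS - η) by ring] at hkey
  have hsum := stdNormCDF_add_neg (s * aS)
  have hgt : stdNormCDF c < stdNormCDF (s * aS) := by
    rw [hc]
    linarith
  have hcs : c < s * aS := by
    by_contra hcon
    push_neg at hcon
    exact absurd (stdNormCDF_mono hcon) (by linarith)
  have h10 : s⁻¹ * c < s⁻¹ * (s * aS) := mul_lt_mul_of_pos_left hcs (inv_pos.2 hspos)
  rwa [inv_mul_cancel_left₀ hspos.ne'] at h10
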